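/- (Kinetic energy identity for Method 2.) Let V be a real inner product space, let λ₀₁, λ₁₀ ∈ [0,1], let η₀, η₁ > 0 be real numbers with η₀' := (1−λ₀₁)·η₀ + λ₁₀·η₁ > 0 and η₁' := (1−λ₁₀)·η₁ + λ₀₁·η₀ > 0, and let u₀, u₁ ∈ V. Define u₀' = ((1−λ₀₁)·η₀·u₀ + λ₁₀·η₁·u₁)/η₀' and u₁' = ((1−λ₁₀)·η₁·u₁ + λ₀₁·η₀·u₀)/η₁'. Then ½·η₀'·‖u₀'‖² + ½·η₁'·‖u₁'‖² = ½·η₀·‖u₀‖² + ½·η₁·‖u₁‖² − ½·μ·‖u₀ − u₁‖², where μ = η₀·η₁·[(1−λ₀₁)·λ₀₁·η₀ + (1−λ₁₀)·λ₁₀·η₁]/(η₀'·η₁'). -/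

import Mathlib

private lemma norm_sq_combo {V : Type*} [NormedAddCommGroup V] [InnerProductSpace ℝ V]
    (α β : ℝ) (u v : V) :
    ‖α • u + β • v‖^2
      = α^2 * ‖u‖^2 + 2 * α * β * (inner ℝ u v : ℝ) + β^2 * ‖v‖^2 := by
  rw [← real_inner_self_eq_norm_sq, ← real_inner_self_eq_norm_sq,
    ← real_inner_self_eq_norm_sq]
  simp only [inner_add_add_self, real_inner_smul_left, real_inner_smul_right,
    real_inner_comm u v]
  ring

/-- Kinetic energy identity for Method 2: the kinetic energy after the
mass-weighted transfer equals the old kinetic energy minus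
½·μ·‖u₀ − u₁‖², where μ is an explicit nonnegative coefficient. -/
theorem method2_kinetic_energy_identity
    {V : Type*} [NormedAddCommGroup V] [InnerProductSpace ℝ V]
    (lam01 lam10 η0 η1 : ℝ)
    (h01l : 0 ≤ lam01) (h01u : lam01 ≤ 1)
    (h10l : 0 ≤ lam10) (h10u : lam10 ≤ 1)
    (hη0 : 0 < η0) (hη1 : 0 < η1)
    (η0' η1' : ℝ)
    (hη0' : η0' = (1 - lam01) * η0 + lam10 * η1)
    (hη1' : η1' = (1 - lam10) * η1 + lam01 * η0)
    (hη0'pos : 0 < η0') (hη1'pos : 0 < η1')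
    (u0 u1 u0' u1' : V)
    (hu0' : u0' = (η0'⁻¹) • ((1 - lam01) • (η0 • u0) + lam10 • (η1 • u1)))
    (hu1' : u1' = (η1'⁻¹) • ((1 - lam10) • (η1 • u1) + lam01 • (η0 • u0)))
    (μ : ℝ)
    (hμ : μ = η0 * η1 * ((1 - lam01) * lam01 * η0 + (1 - lam10) * lam10 * η1)
              / (η0' * η1')) :
    (1/2) * η0' * ‖u0'‖^2 + (1/2) * η1' * ‖u1'‖^2
      = (1/2) * η0 * ‖u0‖^2 + (1/2) * η1 * ‖u1‖^2
        - (1/2) * μ * ‖u0 - u1‖^2 := by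
  have h0 : u0' = (η0'⁻¹ * ((1 - lam01) * η0)) • u0 + (η0'⁻¹ * (lam10 * η1)) • u1 := by
    rw [hu0']; simp [smul_add, smul_smul]
  have h1 : u1' = (η1'⁻¹ * (lam01 * η0)) • u0 + (η1'⁻¹ * ((1 - lam10) * η1)) • u1 := by
    rw [hu1']; simp [smul_add, smul_smul]; abel
  have hd : u0 - u1 = (1:ℝ) • u0 + (-1:ℝ) • u1 := by simp [sub_eq_add_neg]
  rw [h0, h1, hd, norm_sq_combo, norm_sq_combo, norm_sq_combo, hμ, hη0', hη1']
  have e0 : ((1 - lam01) * η0 + lam10 * η1) ≠ 0 := by rw [← hη0']; positivity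
  have e1 : ((1 - lam10) * η1 + lam01 * η0) ≠ 0 := by rw [← hη1']; positivity
  have e1' : η1 * (1 - lam10) + lam01 * η0 ≠ 0 := by rw [show η1 * (1 - lam10) + lam01 * η0 = η1' by rw [hη1']; ring]; positivity
  field_simp
  ring
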